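/- Let n ≥ 1 and let Γ_n = ℤ^n ≀ ℤ be the torsion-free lamplighter group. Then the abelianization Γ_n^{ab} is isomorphic to ℤ^{n+1}, and for every integer m ≥ 2 the lower central quotient γ_m(Γ_n)/γ_{m+1}(Γ_n) is isomorphic to ℤ^n. -/

import Mathlib

open LaurentPolynomial

/-- The base group of the torsion-free lamplighter group: the (additive group of the)
free module of rank `n` over the Laurent polynomial ring `ℤ[T,T⁻¹]`. -/
abbrev LampBase (n : ℕ) : Type := Fin n → LaurentPolynomial ℤ

/-- The shift automorphism of the base: multiplication by `T^z` in each coordinate. -/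
noncomputable def lampShift (n : ℕ) (z : ℤ) : LampBase n ≃+ LampBase n where
  toFun v := fun i => T z * v i
  invFun v := fun i => T (-z) * v i
  left_inv v := by funext i; simp [← mul_assoc, ← T_add]
  right_inv v := by funext i; simp [← mul_assoc, ← T_add]
  map_add' v w := by funext i; simp [mul_add]

/-- The action of `ℤ` on the base group, where `1` acts by multiplication by `T`
in each coordinate. -/
noncomputable def lampAction (n : ℕ) :
    Multiplicative ℤ →* MulAut (Multiplicative (LampBase n)) where
  toFun z := AddEquiv.toMultiplicative (lampShift n z.toAdd)
  map_one' := by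
    ext v : 1
    show Multiplicative.ofAdd ((lampShift n (1 : Multiplicative ℤ).toAdd) v.toAdd) = v
    simp [lampShift]
  map_mul' z w := by
    ext v : 1
    show Multiplicative.ofAdd ((lampShift n (z * w).toAdd) v.toAdd)
        = Multiplicative.ofAdd ((lampShift n z.toAdd)
            (Multiplicative.ofAdd ((lampShift n w.toAdd) v.toAdd)).toAdd)
    simp only [toAdd_mul, toAdd_ofAdd, lampShift, AddEquiv.coe_mk, Equiv.coe_fn_mk]
    congr 1
    funext i
    rw [T_add, mul_assoc]

/-- The torsion-free lamplighter group `ℤ^n ≀ ℤ`, realized as the semidirect product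
of the free `ℤ[T,T⁻¹]`-module of rank `n` by `ℤ`, where `1 ∈ ℤ` acts by multiplication
by `T` in each coordinate. -/
abbrev Lamplighter (n : ℕ) : Type :=
  SemidirectProduct (Multiplicative (LampBase n)) (Multiplicative ℤ) (lampAction n)

/-- Two groups have the same finite quotients if every finite group is a quotient of one
iff it is a quotient of the other. -/
def SameFiniteQuotients (G H : Type*) [Group G] [Group H] : Prop :=
  ∀ (Q : Type) (_ : Group Q) (_ : Finite Q),
    (∃ f : G →* Q, Function.Surjective f) ↔ (∃ f : H →* Q, Function.Surjective f)

/-- A group is residually finite if every nontrivial element is detected by a homomorphism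
to some finite group. -/
def ResiduallyFinite (G : Type*) [Group G] : Prop :=
  ∀ g : G, g ≠ 1 → ∃ (Q : Type) (_ : Group Q) (_ : Finite Q) (f : G →* Q), f g ≠ 1

/-- The `k`-th lower central quotient `γ_{k+1}(G)/γ_{k+2}(G)` (with Mathlib's indexing
`lowerCentralSeries G k = γ_{k+1}(G)`, so `LowerCentralQuotient G k` is the quotient of
the `(k+1)`-st term of the lower central series by the `(k+2)`-nd). -/
def LowerCentralQuotient (G : Type*) [Group G] (k : ℕ) : Type _ :=
  Subgroup.lowerCentralSeries (⊤ : Subgroup G) k ⧸ ((Subgroup.lowerCentralSeries (⊤ : Subgroup G) (k + 1)).subgroupOf (Subgroup.lowerCentralSeries (⊤ : Subgroup G) k))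

noncomputable instance (G : Type*) [Group G] (k : ℕ) : Group (LowerCentralQuotient G k) :=
  inferInstanceAs (Group (_ ⧸ _))

open scoped commutatorElement

lemma act_apply (n : ℕ) (z : Multiplicative ℤ) (a : Multiplicative (LampBase n)) (i : Fin n) :
    Multiplicative.toAdd ((lampAction n z) a) i = T z.toAdd * Multiplicative.toAdd a i := rfl

lemma comm_right (n : ℕ) (g h : Lamplighter n) : ⁅g, h⁆.right = 1 := by
  have : ⁅g, h⁆.right = ⁅g.right, h.right⁆ := rfl
  rw [this, commutatorElement_eq_one_iff_commute]
  exact mul_comm _ _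

lemma comm_left (n : ℕ) (g h : Lamplighter n) (i : Fin n) :
    Multiplicative.toAdd ⁅g, h⁆.left i
      = (T g.right.toAdd - 1) * Multiplicative.toAdd h.left i
        - (T h.right.toAdd - 1) * Multiplicative.toAdd g.left i := by
  rw [commutatorElement_def]
  simp only [SemidirectProduct.mul_left, SemidirectProduct.inv_left,
    SemidirectProduct.mul_right, SemidirectProduct.inv_right,
    toAdd_mul, toAdd_inv, Pi.add_apply, Pi.neg_apply, act_apply]
  simp only [toAdd_mul, toAdd_inv, Pi.add_apply, Pi.neg_apply, act_apply, mul_neg, neg_add,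
    T_add, toAdd_inv]
  have h1 : (T g.right.toAdd * T (-g.right.toAdd) : LaurentPolynomial ℤ) = 1 := by
    rw [← T_add]; simp
  have h2 : (T h.right.toAdd * T (-h.right.toAdd) : LaurentPolynomial ℤ) = 1 := by
    rw [← T_add]; simp
  linear_combination (-(T h.right.toAdd * Multiplicative.toAdd g.left i)
      - Multiplicative.toAdd h.left i) * h1
    - Multiplicative.toAdd h.left i * T g.right.toAdd * T (-g.right.toAdd) * h2

lemma exists_dvd_T_sub_one' (z : ℤ) : ∃ u, (T z - 1 : LaurentPolynomial ℤ) = (T 1 - 1) * u := by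
  induction z using Int.induction_on with
  | zero => exact ⟨0, by simp [T_zero]⟩
  | succ k ih =>
    obtain ⟨u, hu⟩ := ih
    refine ⟨T 1 * u + 1, ?_⟩
    have : (T (k+1) : LaurentPolynomial ℤ) = T 1 * T k := by rw [← T_add]; ring_nf
    rw [this]; ring_nf; linear_combination (T 1 : LaurentPolynomial ℤ) * hu
  | pred k ih =>
    obtain ⟨u, hu⟩ := ih
    refine ⟨T (-1) * u - T (-1), ?_⟩
    have h1 : (T (-(k:ℤ) - 1) : LaurentPolynomial ℤ) = T (-1) * T (-k) := by rw [← T_add]; ring_nf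
    have h2 : (T (-1) * T 1 : LaurentPolynomial ℤ) = 1 := by rw [← T_add]; simp [T_zero]
    rw [h1]
    linear_combination (T (-1) : LaurentPolynomial ℤ) * hu + h2

noncomputable def Sg (n k : ℕ) : Subgroup (Lamplighter n) where
  carrier := {x | x.right = 1 ∧ ∃ w : LampBase n,
      Multiplicative.toAdd x.left = fun i => (T 1 - 1)^k * w i}
  one_mem' := ⟨rfl, 0, by funext i; simp⟩
  mul_mem' := by
    rintro x y ⟨hx1, wx, hx2⟩ ⟨hy1, wy, hy2⟩
    refine ⟨?_, wx + wy, ?_⟩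
    · show x.right * y.right = 1
      rw [hx1, hy1, mul_one]
    · show Multiplicative.toAdd (x.left * (lampAction n x.right) y.left) = _
      rw [hx1, map_one]
      funext i
      simp only [MulAut.one_apply, toAdd_mul, Pi.add_apply, hx2, hy2, Pi.add_apply]
      ring
  inv_mem' := by
    rintro x ⟨hx1, wx, hx2⟩
    refine ⟨?_, -wx, ?_⟩
    · show x.right⁻¹ = 1
      rw [hx1, inv_one]
    · show Multiplicative.toAdd ((lampAction n x.right⁻¹) x.left⁻¹) = _
      rw [hx1, inv_one, map_one]
      funext i
      simp only [MulAut.one_apply, toAdd_inv, Pi.neg_apply, hx2, Pi.neg_apply]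
      ring

lemma mem_Sg {n k : ℕ} (x : Lamplighter n) :
    x ∈ Sg n k ↔ x.right = 1 ∧ ∃ w : LampBase n,
      Multiplicative.toAdd x.left = fun i => (T 1 - 1)^k * w i := Iff.rfl

lemma commutator_Sg_le (n k : ℕ) : ⁅Sg n k, (⊤ : Subgroup (Lamplighter n))⁆ ≤ Sg n (k+1) := by
  rw [Subgroup.commutator_le]
  rintro g ⟨hg1, w, hg2⟩ h -
  obtain ⟨u, hu⟩ := exists_dvd_T_sub_one' h.right.toAdd
  refine ⟨comm_right n g h, fun i => -(u * w i), ?_⟩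
  funext i
  rw [comm_left, hg1, congrFun hg2 i, hu]
  show ((T (1:Multiplicative ℤ).toAdd : LaurentPolynomial ℤ) - 1) * _ - _ = _
  rw [toAdd_one, T_zero]
  ring

lemma commutator_top_le (n : ℕ) :
    ⁅(⊤ : Subgroup (Lamplighter n)), ⊤⁆ ≤ Sg n 1 := by
  rw [Subgroup.commutator_le]
  intro g _ h _
  obtain ⟨u, hu⟩ := exists_dvd_T_sub_one' g.right.toAdd
  obtain ⟨v, hv⟩ := exists_dvd_T_sub_one' h.right.toAdd
  refine ⟨comm_right n g h,
    fun i => u * Multiplicative.toAdd h.left i - v * Multiplicative.toAdd g.left i, ?_⟩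
  funext i
  rw [comm_left, hu, hv]
  ring

lemma Sg_le_commutator (n k : ℕ) :
    Sg n (k+1) ≤ ⁅Sg n k, (⊤ : Subgroup (Lamplighter n))⁆ := by
  rintro x ⟨hx1, w, hx2⟩
  set g : Lamplighter n :=
    SemidirectProduct.inl (Multiplicative.ofAdd (fun i => (T 1 - 1)^k * (-(w i)))) with hg
  set h : Lamplighter n := SemidirectProduct.inr (Multiplicative.ofAdd (1:ℤ)) with hh
  have hx : x = ⁅g, h⁆ := by
    have hleft : Multiplicative.toAdd x.left = Multiplicative.toAdd ⁅g, h⁆.left := by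
      funext j
      rw [comm_left, congrFun hx2 _]
      show _ = (T (1:Multiplicative ℤ).toAdd - 1) * Multiplicative.toAdd (1 : Multiplicative (LampBase n)) _
        - (T (Multiplicative.ofAdd (1:ℤ)).toAdd - 1) * (fun i => (T 1 - 1)^k * (-(w i))) _
      rw [toAdd_one, T_zero]
      show (T 1 - 1)^(k+1) * w _ = (1 - 1) * (0 : LaurentPolynomial ℤ)
        - (T 1 - 1) * ((T 1 - 1)^k * (-(w _)))
      ring
    ext : 1
    · exact Multiplicative.toAdd.injective hleft
    · rw [comm_right]; exact hx1
  rw [hx]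
  exact Subgroup.commutator_mem_commutator
    ⟨rfl, fun i => -(w i), rfl⟩ (Subgroup.mem_top h)

lemma lcs_eq (n k : ℕ) : (⊤ : Subgroup (Lamplighter n)).lowerCentralSeries (k+1) = Sg n (k+1) := by
  induction k with
  | zero =>
    have h0 : (⊤ : Subgroup (Lamplighter n)).lowerCentralSeries 1 = ⁅(⊤ : Subgroup (Lamplighter n)), ⊤⁆ := by
      rw [show (⊤ : Subgroup (Lamplighter n)).lowerCentralSeries 1
          = ⁅(⊤ : Subgroup (Lamplighter n)).lowerCentralSeries 0, ⊤⁆ from rfl, Subgroup.lowerCentralSeries_zero]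
    rw [h0]
    exact le_antisymm (commutator_top_le n)
      ((Sg_le_commutator n 0).trans (Subgroup.commutator_mono le_top le_top))
  | succ k ih =>
    rw [show (⊤ : Subgroup (Lamplighter n)).lowerCentralSeries (k+2)
        = ⁅(⊤ : Subgroup (Lamplighter n)).lowerCentralSeries (k+1), ⊤⁆ from rfl, ih]
    exact le_antisymm (commutator_Sg_le n (k+1)) (Sg_le_commutator n (k+1))

noncomputable def eps : LaurentPolynomial ℤ →ₐ[ℤ] ℤ := AddMonoidAlgebra.lift ℤ ℤ ℤ 1

lemma eps_T (z : ℤ) : eps (T z) = 1 := by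
  show AddMonoidAlgebra.lift ℤ ℤ ℤ 1 (AddMonoidAlgebra.single z 1) = 1
  rw [AddMonoidAlgebra.lift_single]; simp

lemma eps_C (a : ℤ) : eps (C a) = a := by
  rw [← single_eq_C]
  show AddMonoidAlgebra.lift ℤ ℤ ℤ 1 (AddMonoidAlgebra.single 0 a) = a
  rw [AddMonoidAlgebra.lift_single]; simp

lemma tt_ne_zero : (T 1 - 1 : LaurentPolynomial ℤ) ≠ 0 := by
  intro h
  have h2 : (T 1 : LaurentPolynomial ℤ) = T 0 := by rw [T_zero]; linear_combination h
  have h3 := congrArg (fun p : LaurentPolynomial ℤ => p.coeff 1) h2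
  simp only [T_apply] at h3
  simp at h3

lemma eps_eq_zero_iff (f : LaurentPolynomial ℤ) :
    eps f = 0 ↔ ∃ u, f = (T 1 - 1) * u := by
  constructor
  · intro h0
    have key : ∀ f : LaurentPolynomial ℤ, ∃ u, f = C (eps f) + (T 1 - 1) * u := by
      intro f
      induction f using LaurentPolynomial.induction_on' with
      | add p q hp hq =>
        obtain ⟨u, hu⟩ := hp; obtain ⟨v, hv⟩ := hq
        exact ⟨u + v, by rw [map_add, map_add]; ring_nf; linear_combination hu + hv⟩
      | C_mul_T z a =>
        obtain ⟨u, hu⟩ := exists_dvd_T_sub_one' z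
        refine ⟨C a * u, ?_⟩
        rw [map_mul, eps_C, eps_T, mul_one]
        linear_combination (C a : LaurentPolynomial ℤ) * hu
    obtain ⟨u, hu⟩ := key f
    exact ⟨u, by rw [hu, h0]; simp⟩
  · rintro ⟨u, rfl⟩
    rw [map_mul, map_sub, eps_T, map_one, sub_self, zero_mul]

open scoped Classical in
noncomputable def dd (k : ℕ) (r : LaurentPolynomial ℤ) : ℤ :=
  if h : ∃ u, r = (T 1 - 1)^k * u then eps h.choose else 0

lemma dd_mul (k : ℕ) (u : LaurentPolynomial ℤ) : dd k ((T 1 - 1)^k * u) = eps u := by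
  have h : ∃ v, ((T 1 - 1 : LaurentPolynomial ℤ))^k * u = (T 1 - 1)^k * v := ⟨u, rfl⟩
  rw [show dd k ((T 1 - 1)^k * u) = eps h.choose from dif_pos h]
  congr 1
  exact mul_left_cancel₀ (pow_ne_zero k tt_ne_zero) h.choose_spec.symm

noncomputable def Phi (n k : ℕ) : (Sg n k) →* Multiplicative (Fin n → ℤ) :=
  MonoidHom.mk'
    (fun x => Multiplicative.ofAdd (fun i => dd k (Multiplicative.toAdd x.1.left i)))
    (by
      intro x y
      obtain ⟨hx1, wx, hx2⟩ := x.2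
      obtain ⟨hy1, wy, hy2⟩ := y.2
      have h3 : Multiplicative.toAdd ((x*y) : Sg n k).1.left
          = fun i => (T 1 - 1)^k * (wx i + wy i) := by
        show Multiplicative.toAdd (x.1.left * (lampAction n x.1.right) y.1.left) = _
        rw [hx1, map_one]
        funext i
        simp only [MulAut.one_apply, toAdd_mul, Pi.add_apply, hx2, hy2]
        ring
      show Multiplicative.ofAdd (fun i => dd k (Multiplicative.toAdd ((x*y) : Sg n k).1.left i))
        = Multiplicative.ofAdd (fun i => dd k (Multiplicative.toAdd x.1.left i))
          * Multiplicative.ofAdd (fun i => dd k (Multiplicative.toAdd y.1.left i))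
      rw [← ofAdd_add]
      exact congrArg Multiplicative.ofAdd (by
        funext i
        rw [Pi.add_apply, congrFun h3 i, dd_mul, congrFun hx2 i, congrFun hy2 i, dd_mul, dd_mul,
          map_add]))

lemma Phi_ker (n k : ℕ) : (Phi n k).ker = (Sg n (k+1)).subgroupOf (Sg n k) := by
  ext x
  obtain ⟨hx1, w, hx2⟩ := x.2
  rw [MonoidHom.mem_ker, Subgroup.mem_subgroupOf]
  constructor
  · intro h
    have h0 : ∀ i, dd k (Multiplicative.toAdd x.1.left i) = 0 := by
      intro i
      exact congrFun (Multiplicative.ofAdd.injective (h.trans ofAdd_zero.symm)) i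
    have h1 : ∀ i, ∃ u, w i = (T 1 - 1) * u := by
      intro i
      apply (eps_eq_zero_iff (w i)).mp
      have := h0 i
      rwa [congrFun hx2 i, dd_mul] at this
    choose u hu using h1
    exact ⟨hx1, u, by funext i; rw [congrFun hx2 i, hu i]; ring⟩
  · rintro ⟨-, u, hu⟩
    have h2 : (fun i => dd k (Multiplicative.toAdd x.1.left i)) = (0 : Fin n → ℤ) := by
      funext i
      rw [congrFun hu i, show ((T 1 - 1 : LaurentPolynomial ℤ))^(k+1) * u i
        = (T 1 - 1)^k * ((T 1 - 1) * u i) by ring, dd_mul]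
      exact (eps_eq_zero_iff _).mpr ⟨u i, rfl⟩
    show Multiplicative.ofAdd (fun i => dd k (Multiplicative.toAdd x.1.left i)) = 1
    rw [h2, ofAdd_zero]

lemma Phi_surj (n k : ℕ) : Function.Surjective (Phi n k) := by
  intro y
  refine ⟨⟨SemidirectProduct.inl (Multiplicative.ofAdd
      (fun i => (T 1 - 1)^k * C (Multiplicative.toAdd y i))), rfl,
      fun i => C (Multiplicative.toAdd y i), by funext i; rfl⟩, ?_⟩
  have h1 : (fun i => dd k ((T 1 - 1)^k * C (Multiplicative.toAdd y i)))
      = Multiplicative.toAdd y := by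
    funext i; rw [dd_mul, eps_C]
  show Multiplicative.ofAdd
      (fun i => dd k ((T 1 - 1)^k * C (Multiplicative.toAdd y i))) = y
  rw [h1, ofAdd_toAdd]

instance SgNormal (n k : ℕ) : ((Sg n (k+1)).subgroupOf (Sg n k)).Normal := by
  rw [← Phi_ker]; exact MonoidHom.normal_ker _

lemma quot_iso (n k : ℕ) :
    Nonempty ((Sg n k) ⧸ ((Sg n (k+1)).subgroupOf (Sg n k)) ≃* Multiplicative (Fin n → ℤ)) :=
  ⟨(QuotientGroup.quotientMulEquivOfEq (Phi_ker n k).symm).trans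
    (QuotientGroup.quotientKerEquivOfSurjective _ (Phi_surj n k))⟩

lemma quot_transfer (n k : ℕ) (H K : Subgroup (Lamplighter n)) (hH : H = Sg n k)
    (hK : K = Sg n (k+1)) [(K.subgroupOf H).Normal] :
    Nonempty (H ⧸ K.subgroupOf H ≃* Multiplicative (Fin n → ℤ)) := by
  subst hH; subst hK; exact quot_iso n k

noncomputable def e1 (n : ℕ) : LampBase n →+ (Fin (n+1) → ℤ) :=
  AddMonoidHom.mk' (fun v j => if h : (j:ℕ) < n then eps (v ⟨j, h⟩) else 0)
    (by
      intro v w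
      funext j
      by_cases h : (j:ℕ) < n <;> simp [h])

def e2 (n : ℕ) : ℤ →+ (Fin (n+1) → ℤ) :=
  AddMonoidHom.mk' (fun z j => if (j:ℕ) = n then z else 0)
    (by
      intro a b
      funext j
      by_cases h : (j:ℕ) = n <;> simp [h])

lemma e1_apply (n : ℕ) (v : LampBase n) (j : Fin (n+1)) :
    e1 n v j = if h : (j:ℕ) < n then eps (v ⟨j, h⟩) else 0 := rfl

lemma e2_apply (n : ℕ) (z : ℤ) (j : Fin (n+1)) :
    e2 n z j = if (j:ℕ) = n then z else 0 := rfl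

lemma e1_act (n : ℕ) (z : Multiplicative ℤ) (a : Multiplicative (LampBase n)) :
    e1 n (Multiplicative.toAdd ((lampAction n z) a)) = e1 n (Multiplicative.toAdd a) := by
  funext j
  rw [e1_apply, e1_apply]
  by_cases h : (j:ℕ) < n
  · rw [dif_pos h, dif_pos h, act_apply, map_mul, eps_T, one_mul]
  · rw [dif_neg h, dif_neg h]

noncomputable def Theta (n : ℕ) : Lamplighter n →* Multiplicative (Fin (n+1) → ℤ) :=
  MonoidHom.mk'
    (fun x => Multiplicative.ofAdd
      (e1 n (Multiplicative.toAdd x.left) + e2 n (Multiplicative.toAdd x.right)))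
    (by
      intro x y
      show Multiplicative.ofAdd
          (e1 n (Multiplicative.toAdd (x.left * (lampAction n x.right) y.left))
            + e2 n (Multiplicative.toAdd (x.right * y.right)))
        = Multiplicative.ofAdd
            (e1 n (Multiplicative.toAdd x.left) + e2 n (Multiplicative.toAdd x.right))
          * Multiplicative.ofAdd
            (e1 n (Multiplicative.toAdd y.left) + e2 n (Multiplicative.toAdd y.right))
      rw [toAdd_mul, toAdd_mul, map_add (e1 n), map_add (e2 n), e1_act]
      show _ = Multiplicative.ofAdd
          ((e1 n (Multiplicative.toAdd x.left) + e2 n (Multiplicative.toAdd x.right))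
            + (e1 n (Multiplicative.toAdd y.left) + e2 n (Multiplicative.toAdd y.right)))
      exact congrArg Multiplicative.ofAdd (by abel))

lemma Theta_ker (n : ℕ) : (Theta n).ker = Sg n 1 := by
  ext x
  rw [MonoidHom.mem_ker]
  constructor
  · intro h
    have h0 : e1 n (Multiplicative.toAdd x.left) + e2 n (Multiplicative.toAdd x.right) = 0 :=
      Multiplicative.ofAdd.injective (h.trans ofAdd_zero.symm)
    have hr : Multiplicative.toAdd x.right = 0 := by
      have h3 := congrFun h0 (Fin.last n)
      rwa [Pi.add_apply, e1_apply, dif_neg (by simp), e2_apply, if_pos (by simp), zero_add,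
        Pi.zero_apply] at h3
    have hv' : ∀ (j : Fin (n+1)) (hj : (j:ℕ) < n),
        eps (Multiplicative.toAdd x.left ⟨j, hj⟩) = 0 := by
      intro j hj
      have h3 := congrFun h0 j
      rwa [Pi.add_apply, e1_apply, dif_pos hj, e2_apply, if_neg (by omega), add_zero,
        Pi.zero_apply] at h3
    have hv : ∀ i : Fin n, eps (Multiplicative.toAdd x.left i) = 0 := by
      intro i
      have h5 := hv' (Fin.castSucc i) (by simp [i.2])
      simpa using h5
    refine ⟨?_, ?_⟩
    · apply Multiplicative.toAdd.injective
      rw [hr, toAdd_one]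
    · choose u hu using fun i => (eps_eq_zero_iff _).mp (hv i)
      exact ⟨u, by funext i; rw [hu i]; ring⟩
  · rintro ⟨hx1, w, hx2⟩
    show Multiplicative.ofAdd
        (e1 n (Multiplicative.toAdd x.left) + e2 n (Multiplicative.toAdd x.right)) = 1
    have hz : e1 n (Multiplicative.toAdd x.left) + e2 n (Multiplicative.toAdd x.right) = 0 := by
      rw [hx1, toAdd_one, map_zero, add_zero]
      funext j
      rw [e1_apply, Pi.zero_apply]
      by_cases h : (j:ℕ) < n
      · rw [dif_pos h, congrFun hx2 ⟨j, h⟩, pow_one, map_mul, map_sub, eps_T, map_one,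
          sub_self, zero_mul]
      · rw [dif_neg h]
    rw [hz, ofAdd_zero]

lemma Theta_surj (n : ℕ) : Function.Surjective (Theta n) := by
  intro y
  refine ⟨SemidirectProduct.inl (Multiplicative.ofAdd
      (fun i : Fin n => C (Multiplicative.toAdd y (Fin.castSucc i))))
    * SemidirectProduct.inr (Multiplicative.ofAdd (Multiplicative.toAdd y (Fin.last n))), ?_⟩
  rw [map_mul]
  show Multiplicative.ofAdd
      (e1 n (fun i : Fin n => C (Multiplicative.toAdd y (Fin.castSucc i)))
        + e2 n (Multiplicative.toAdd (1 : Multiplicative ℤ)))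
    * Multiplicative.ofAdd
      (e1 n (Multiplicative.toAdd (1 : Multiplicative (LampBase n)))
        + e2 n (Multiplicative.toAdd y (Fin.last n))) = y
  rw [toAdd_one, toAdd_one, map_zero, map_zero, add_zero, zero_add]
  have hz : e1 n (fun i : Fin n => C (Multiplicative.toAdd y (Fin.castSucc i)))
      + e2 n (Multiplicative.toAdd y (Fin.last n)) = Multiplicative.toAdd y := by
    funext j
    rw [Pi.add_apply, e1_apply, e2_apply]
    by_cases h : (j:ℕ) < n
    · rw [dif_pos h, if_neg (by omega), add_zero, eps_C]
      congr 1
    · have hj : j = Fin.last n := Fin.ext (by simpa using by omega)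
      rw [dif_neg h, if_pos (by rw [hj]; simp), zero_add, hj]
  show Multiplicative.ofAdd
      ((e1 n (fun i : Fin n => C (Multiplicative.toAdd y (Fin.castSucc i))))
        + e2 n (Multiplicative.toAdd y (Fin.last n))) = y
  rw [hz, ofAdd_toAdd]

lemma commutator_eq (n : ℕ) : commutator (Lamplighter n) = Sg n 1 :=
  le_antisymm (commutator_top_le n)
    ((Sg_le_commutator n 0).trans (Subgroup.commutator_mono le_top le_top))

lemma ab_iso (n : ℕ) :
    Nonempty (Abelianization (Lamplighter n) ≃* Multiplicative (Fin (n+1) → ℤ)) := by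
  have h : commutator (Lamplighter n) = (Theta n).ker := (commutator_eq n).trans (Theta_ker n).symm
  exact ⟨(QuotientGroup.quotientMulEquivOfEq h).trans
    (QuotientGroup.quotientKerEquivOfSurjective _ (Theta_surj n))⟩

/-- For the torsion-free lamplighter group `Γ_n = ℤ^n ≀ ℤ`: the abelianization is
isomorphic to `ℤ^{n+1}`, and `γ_m(Γ_n)/γ_{m+1}(Γ_n) ≅ ℤ^n` for every `m ≥ 2`. -/
theorem lamplighter_abelianization_and_lowerCentralQuotients (n : ℕ) (hn : 1 ≤ n) :
    Nonempty (Abelianization (Lamplighter n) ≃* Multiplicative (Fin (n + 1) → ℤ)) ∧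
      ∀ m : ℕ, 2 ≤ m →
        Nonempty (LowerCentralQuotient (Lamplighter n) (m - 1) ≃*
          Multiplicative (Fin n → ℤ)) := by
  refine ⟨ab_iso n, ?_⟩
  intro m hm
  have h1 : (⊤ : Subgroup (Lamplighter n)).lowerCentralSeries (m-1) = Sg n (m-1) := by
    rw [show m - 1 = (m-2) + 1 by omega]
    exact lcs_eq n (m-2)
  have h2 : (⊤ : Subgroup (Lamplighter n)).lowerCentralSeries ((m-1)+1) = Sg n ((m-1)+1) := lcs_eq n (m-1)
  exact quot_transfer n (m-1) _ _ h1 h2
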